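/- Let r > 0 and let x ∈ K₁⁺ with ‖x‖₁ > r. Then for every d > 0, the Mordukhovich (Fréchet) coderivative of the metric projection P_{rB} at the point (x, (r/‖x‖₁)·x) evaluated at the constant sequence β_d satisfies D̂*P_{rB}(x, (r/‖x‖₁)·x)(β_d) = ∅. -/

import Mathlib

open scoped ENNReal

/-- The real Banach space `ℓ¹` of absolutely summable real sequences. -/
noncomputable abbrev ell1 : Type := lp (fun _ : ℕ => ℝ) 1

/-- The real Banach space `ℓ∞` of bounded real sequences (the dual of `ℓ¹`). -/
noncomputable abbrev ellInfty : Type := lp (fun _ : ℕ => ℝ) ∞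

/-- The canonical pairing `⟨φ, x⟩ = ∑ₙ φₙ xₙ` between `ℓ∞` and `ℓ¹`. -/
noncomputable def pairing (φ : ellInfty) (x : ell1) : ℝ := ∑' n, φ n * x n

/-- The constant sequence `β_a = (a, a, a, …) ∈ ℓ∞`. -/
noncomputable def betaSeq (a : ℝ) : ellInfty :=
  ⟨fun _ => a, memℓp_infty (bddAbove_singleton.mono Set.range_const_subset)⟩

/-- The set of best approximations of `x` from the closed ball of radius `r`
centered at the origin of `ℓ¹`: `P_{rB}(x) = {u ∈ rB : ‖x − u‖₁ ≤ ‖x − z‖₁ for all z ∈ rB}`. -/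
def projBall (r : ℝ) (x : ell1) : Set ell1 :=
  {u : ell1 | ‖u‖ ≤ r ∧ ∀ z : ell1, ‖z‖ ≤ r → ‖x - u‖ ≤ ‖x - z‖}

/-- `ψ` belongs to the Mordukhovich (Fréchet) coderivative `D̂*P(x, y)(φ)` of the set-valued map
`P : ℓ¹ ⇉ ℓ¹` at `(x, y)` evaluated at `φ`:
`limsup_{(u,v)→(x,y), v ∈ P(u)} (⟨ψ, u − x⟩ − ⟨φ, v − y⟩)/(‖u − x‖ + ‖v − y‖) ≤ 0`. -/
def inCoderiv (P : ell1 → Set ell1) (x y : ell1) (ψ φ : ellInfty) : Prop :=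
  ∀ ε > (0 : ℝ), ∃ δ > (0 : ℝ), ∀ u v : ell1, v ∈ P u → ‖u - x‖ < δ → ‖v - y‖ < δ →
    pairing ψ (u - x) - pairing φ (v - y) ≤ ε * (‖u - x‖ + ‖v - y‖)

/- ### Auxiliary lemmas -/

lemma ell1_norm (f : ell1) : ‖f‖ = ∑' n, |f n| := by
  have := lp.norm_eq_tsum_rpow (p := 1) (by norm_num) f
  simpa using this

lemma ell1_summable (f : ell1) : Summable (fun n => |f n|) := by
  simpa using (lp.memℓp f).summable (p := 1) (by norm_num)

noncomputable def sgl (n : ℕ) (c : ℝ) : ell1 := lp.single (E := fun _ : ℕ => ℝ) 1 n c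

lemma sgl_apply_self (n : ℕ) (c : ℝ) : sgl n c n = c :=
  lp.single_apply_self (E := fun _ : ℕ => ℝ) 1 n c

lemma sgl_apply_ne (n : ℕ) (c : ℝ) {m : ℕ} (h : m ≠ n) : sgl n c m = 0 :=
  lp.single_apply_ne (E := fun _ : ℕ => ℝ) 1 n c h

lemma sgl_eq_smul (n : ℕ) (c : ℝ) : sgl n c = c • sgl n 1 := by
  have := lp.single_smul (E := fun _ : ℕ => ℝ) 1 n c (1 : ℝ)
  simp only [smul_eq_mul, mul_one] at this
  simpa [sgl] using this

lemma sgl_sub (n : ℕ) (c c' : ℝ) : sgl n c - sgl n c' = sgl n (c - c') := by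
  rw [sgl_eq_smul n c, sgl_eq_smul n c', sgl_eq_smul n (c - c'), ← sub_smul]

lemma norm_add_sgl (f : ell1) (n : ℕ) (c : ℝ) :
    ‖f + sgl n c‖ = ‖f‖ - |f n| + |f n + c| := by
  have hsum := ell1_summable f
  have hsum2 := ell1_summable (f + sgl n c)
  have happ : ∀ m, (f + sgl n c) m = f m + sgl n c m := fun m => lp.coeFn_add f (sgl n c) ▸ rfl
  rw [ell1_norm, ell1_norm]
  rw [hsum2.tsum_eq_add_tsum_ite n, hsum.tsum_eq_add_tsum_ite n]
  have h1 : (f + sgl n c) n = f n + c := by rw [happ, sgl_apply_self]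
  have h2 : ∀ m, (if m = n then 0 else |(f + sgl n c) m|) = (if m = n then 0 else |f m|) := by
    intro m
    by_cases h : m = n
    · simp [h]
    · simp [h, happ, sgl_apply_ne n c h]
  rw [h1, tsum_congr h2]
  ring

lemma norm_sgl (n : ℕ) (c : ℝ) : ‖sgl n c‖ = |c| := by
  have := norm_add_sgl 0 n c
  simpa using this

lemma pairing_sgl (ψ : ellInfty) (n : ℕ) (c : ℝ) : pairing ψ (sgl n c) = ψ n * c := by
  unfold pairing
  rw [tsum_eq_single n]
  · rw [sgl_apply_self]
  · intro m hm; rw [sgl_apply_ne n c hm, mul_zero]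

lemma pairing_zero (ψ : ellInfty) : pairing ψ 0 = 0 := by
  unfold pairing
  have : ∀ m : ℕ, ψ m * (0 : ell1) m = 0 := by
    intro m; rw [lp.coeFn_zero]; simp
  rw [tsum_congr this, tsum_zero]

lemma betaSeq_apply (a : ℝ) (n : ℕ) : (betaSeq a) n = a := rfl

lemma mem_projBall_of (r : ℝ) (u v : ell1) (hv : ‖v‖ ≤ r) (huv : ‖u - v‖ ≤ ‖u‖ - r) :
    v ∈ projBall r u := by
  refine ⟨hv, fun z hz => ?_⟩
  calc ‖u - v‖ ≤ ‖u‖ - r := huv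
    _ ≤ ‖u‖ - ‖z‖ := by linarith
    _ ≤ ‖u - z‖ := norm_sub_norm_le u z


set_option maxHeartbeats 1000000 in
/-- Theorem 3.4 (ii)(b). Let `r > 0` and `x ∈ K₁⁺` with `‖x‖₁ > r`. Then
for every `d > 0`, the Mordukhovich (Fréchet) coderivative of `P_{rB}` at `(x, (r/‖x‖₁)·x)`
evaluated at the constant sequence `β_d` satisfies `D̂*P_{rB}(x, (r/‖x‖₁)·x)(β_d) = ∅`. -/
theorem stmt_8 (r : ℝ) (hr : 0 < r) (x : ell1) (hx_pos : ∀ n, 0 < x n)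
    (hx : r < ‖x‖) (d : ℝ) (hd : 0 < d) :
    {ψ : ellInfty | inCoderiv (projBall r) x ((r / ‖x‖) • x) ψ (betaSeq d)} = ∅ := by
  ext ψ
  simp only [Set.mem_setOf_eq, Set.mem_empty_iff_false, iff_false]
  intro hψ
  set c : ℝ := r / ‖x‖ with hc_def
  set y : ell1 := c • x with hy_def
  have hxnorm : (0 : ℝ) < ‖x‖ := hr.trans hx
  have hc0 : 0 < c := div_pos hr hxnorm
  have hc1 : c < 1 := (div_lt_one hxnorm).2 hx
  have hcr : c * ‖x‖ = r := div_mul_cancel₀ r hxnorm.ne'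
  have hyapp : ∀ n, y n = c * x n := by
    intro n
    rw [hy_def]
    exact congrFun (lp.coeFn_smul c x) n
  have hynorm : ‖y‖ = r := by
    rw [hy_def, norm_smul, Real.norm_eq_abs, abs_of_pos hc0, hcr]
  have hxy : ‖x - y‖ = ‖x‖ - r := by
    have : x - y = (1 - c) • x := by rw [hy_def, sub_smul, one_smul]
    rw [this, norm_smul, Real.norm_eq_abs, abs_of_pos (by linarith), sub_mul, one_mul, hcr]
  have hxyapp : ∀ n, (x - y) n = (1 - c) * x n := by
    intro n
    have : (x - y) n = x n - y n := congrFun (lp.coeFn_sub x y) n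
    rw [this, hyapp]; ring
  -- Step 1: ψ n ≤ 0 for all n
  have hψ_nonpos : ∀ n, ψ n ≤ 0 := by
    intro n
    by_contra hpos
    push_neg at hpos
    obtain ⟨δ, hδ, H⟩ := hψ (ψ n / 2) (by linarith)
    set t : ℝ := δ / 2 with ht_def
    have ht : 0 < t := by positivity
    set u : ell1 := x + sgl n t with hu_def
    have hux : u - x = sgl n t := by rw [hu_def, add_sub_cancel_left]
    have huxnorm : ‖u - x‖ = t := by rw [hux, norm_sgl, abs_of_pos ht]
    have hunorm : ‖u‖ = ‖x‖ + t := by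
      rw [hu_def, norm_add_sgl, abs_of_pos (hx_pos n), abs_of_pos (by linarith [hx_pos n])]
      ring
    have huy : ‖u - y‖ ≤ ‖u‖ - r := by
      have : u - y = (x - y) + sgl n t := by rw [hu_def]; abel
      rw [this, norm_add_sgl, hxy, hxyapp, hunorm]
      have h1 : (0:ℝ) ≤ (1 - c) * x n := by
        have := hx_pos n; nlinarith
      rw [abs_of_nonneg h1, abs_of_pos (by linarith)]
      ring_nf
      linarith
    have hmem : y ∈ projBall r u := mem_projBall_of r u y (le_of_eq hynorm) huy
    have := H u y hmem (by rw [huxnorm]; linarith) (by simp [hδ])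
    rw [hux, sub_self, pairing_zero, pairing_sgl, norm_sgl, abs_of_pos ht] at this
    simp only [norm_zero, add_zero, sub_zero] at this
    nlinarith
  -- Step 2: contradiction
  obtain ⟨δ, hδ, H⟩ := hψ (d * c / (1 + 3 * c)) (by positivity)
  -- pick n with x n small
  have htend : Filter.Tendsto (fun n => |x n|) Filter.atTop (nhds 0) :=
    (ell1_summable x).tendsto_atTop_zero
  have hsmall : ∃ n, |x n| < min (δ / 2) (‖x‖ - r) := by
    have hm : (0:ℝ) < min (δ / 2) (‖x‖ - r) := lt_min (by linarith) (by linarith)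
    exact (htend.eventually (gt_mem_nhds hm)).exists
  obtain ⟨n, hn⟩ := hsmall
  set a : ℝ := x n with ha_def
  have ha : 0 < a := hx_pos n
  rw [abs_of_pos ha] at hn
  have han1 : a < δ / 2 := lt_of_lt_of_le hn (min_le_left _ _)
  have han2 : a < ‖x‖ - r := lt_of_lt_of_le hn (min_le_right _ _)
  set b : ℝ := c * a with hb_def
  have hb : 0 < b := mul_pos hc0 ha
  have hba : b < a := by nlinarith
  set u : ell1 := x + sgl n (-(a + b)) with hu_def
  set v : ell1 := y + sgl n (-(2 * b)) with hv_def
  have hux : u - x = sgl n (-(a + b)) := by rw [hu_def, add_sub_cancel_left]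
  have hvy : v - y = sgl n (-(2 * b)) := by rw [hv_def, add_sub_cancel_left]
  have huxnorm : ‖u - x‖ = a + b := by
    rw [hux, norm_sgl, abs_neg, abs_of_pos (by linarith)]
  have hvynorm : ‖v - y‖ = 2 * b := by
    rw [hvy, norm_sgl, abs_neg, abs_of_pos (by linarith)]
  have hvnorm : ‖v‖ = r := by
    rw [hv_def, norm_add_sgl, hyapp, hynorm, ← hb_def]
    rw [abs_of_pos hb]
    have : b + -(2 * b) = -b := by ring
    rw [this, abs_neg, abs_of_pos hb]
    ring
  have hunorm : ‖u‖ = ‖x‖ - a + b := by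
    rw [hu_def, norm_add_sgl, ← ha_def, abs_of_pos ha]
    have : a + -(a + b) = -b := by ring
    rw [this, abs_neg, abs_of_pos hb]
  have huv : ‖u - v‖ ≤ ‖u‖ - r := by
    have h1 : u - v = (x - y) + sgl n (b - a) := by
      rw [hu_def, hv_def]
      have : x + sgl n (-(a + b)) - (y + sgl n (-(2 * b)))
          = (x - y) + (sgl n (-(a + b)) - sgl n (-(2 * b))) := by abel
      have harg : -(a + b) - -(2 * b) = b - a := by ring
      rw [this, sgl_sub, harg]
    rw [h1, norm_add_sgl, hxy, hxyapp, hunorm]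
    have h2 : (0:ℝ) ≤ (1 - c) * x n :=
      mul_nonneg (by linarith) (hx_pos n).le
    rw [abs_of_nonneg h2]
    have h3 : (1 - c) * x n + (b - a) = 0 := by
      rw [hb_def, ha_def]; ring
    rw [h3, abs_zero, ← ha_def]
    have : (1 - c) * a = a - b := by rw [hb_def]; ring
    rw [this]
    ring_nf
    linarith
  have hmem : v ∈ projBall r u := mem_projBall_of r u v (le_of_eq hvnorm) huv
  have hkey := H u v hmem (by rw [huxnorm]; linarith) (by rw [hvynorm]; linarith)
  rw [hux, hvy, pairing_sgl, pairing_sgl, norm_sgl, norm_sgl, abs_neg, abs_neg,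
    abs_of_pos (by linarith : (0:ℝ) < a + b), abs_of_pos (by linarith : (0:ℝ) < 2 * b),
    betaSeq_apply] at hkey
  have hψn := hψ_nonpos n
  have hc3 : (0:ℝ) < 1 + 3 * c := by linarith
  rw [div_mul_eq_mul_div, le_div_iff₀ hc3] at hkey
  have h5 : d * c * (a + b + 2 * b) = d * b * (1 + 3 * c) := by rw [hb_def]; ring
  rw [h5] at hkey
  have h6 : ψ n * -(a + b) - d * -(2 * b) ≤ d * b :=
    le_of_mul_le_mul_right hkey hc3
  nlinarith [mul_nonpos_of_nonpos_of_nonneg hψn (by linarith : (0:ℝ) ≤ a + b)]
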